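/- Let N, d be positive integers with d | N, let D be a positive non-square congruent to a square mod 4N, and let Q = [Na, b, c] ∈ Q_{N,D,1} with gcd(Na, b, c) = 1. Put Q^{(d)} = [(N/d)a, b, cd]. Then every element of the stabilizer of Q^{(d)} in Γ₀(N/d) lies in Γ₀⁰(N/d, d) := {[[α,β],[γ,δ]] ∈ Γ₀(N/d) : β ≡ 0 (mod d)}; i.e., Γ₀(N/d)_{Q^{(d)}} = Γ₀⁰(N/d, d)_{Q^{(d)}}. -/
import Mathlib


/-- let `d ∣ N`, `D` a positive non-square, `Q = [Na,b,c]` a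
`Γ₀(N)`-primitive form with `b² - 4Nac = D` and `b ≡ 1 (mod 2N)`, and put
`Q^{(d)} = [(N/d)a, b, cd]`. Then every element of `Γ₀(N/d)` stabilizing
`Q^{(d)}` has upper-right entry divisible by `d`, i.e.
`Γ₀(N/d)_{Q^{(d)}} = Γ₀⁰(N/d,d)_{Q^{(d)}}`. -/
theorem stabilizer_in_gamma00
    (N d N' : ℤ) (hN : 0 < N) (hd : 0 < d) (hdN : N = d * N')
    (a b c D : ℤ) (hdisc : b ^ 2 - 4 * N * a * c = D) (hDpos : 0 < D)
    (hDns : ¬ ∃ m : ℤ, m ^ 2 = D)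
    (hb : b ≡ 1 [ZMOD 2 * N])
    (hprim : Int.gcd (N * a) (Int.gcd b c) = 1)
    (α β γ δ : ℤ) (hdet : α * δ - β * γ = 1) (hγ : N' ∣ γ)
    (hstab : ∀ x y : ℤ,
      (N' * a) * (α * x + β * y) ^ 2 + b * (α * x + β * y) * (γ * x + δ * y)
          + (c * d) * (γ * x + δ * y) ^ 2
        = (N' * a) * x ^ 2 + b * x * y + (c * d) * y ^ 2) :
    d ∣ β := by
  set A : ℤ := N' * a with hA
  set C : ℤ := c * d with hC
  -- diagonal and cross-term equations
  have e1 : A * α ^ 2 + b * α * γ + C * γ ^ 2 = A := by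
    have h := hstab 1 0; linear_combination h
  have e2 : A * β ^ 2 + b * β * δ + C * δ ^ 2 = C := by
    have h := hstab 0 1; linear_combination h
  have e3 : A * α * β + b * β * γ + C * γ * δ = 0 := by
    have h := hstab 1 1
    have h2 : 2 * (A * α * β + b * β * γ + C * γ * δ) = 0 := by
      linear_combination h - e1 - e2 - b * hdet
    linarith
  -- key identity: A β = -C γ
  have key : A * β = -(C * γ) := by
    linear_combination δ * e3 - γ * e2 - A * β * hdet
  -- divisibilities of b*(βδ) and b*(βγ) by d
  have hβδ : d ∣ b * (β * δ) := by
    refine ⟨c * (1 - δ ^ 2 + γ * β), ?_⟩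
    linear_combination e2 - β * key
  have hβγ : d ∣ b * (β * γ) := by
    refine ⟨c * (γ * (α - δ)), ?_⟩
    linear_combination e3 - α * key
  -- d is coprime to b
  have hdvd : d ∣ 1 - b := by
    have h2N : (2 * N) ∣ 1 - b := hb.dvd
    exact dvd_trans ⟨2 * N', by rw [hdN]; ring⟩ h2N
  obtain ⟨k, hk⟩ := hdvd
  have hco : IsCoprime d b := ⟨k, 1, by linarith⟩
  have h1 : d ∣ β * δ := hco.dvd_of_dvd_mul_left hβδ
  have h2 : d ∣ β * γ := hco.dvd_of_dvd_mul_left hβγ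
  have : β = α * (β * δ) - β * (β * γ) := by linear_combination -β * hdet
  rw [this]
  exact dvd_sub (Dvd.dvd.mul_left h1 α) (Dvd.dvd.mul_left h2 β)
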